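/- arXiv:1212.0687 — 2 statements merged into one kernel-verified Lean document; each statement's English description precedes it below -/
import Mathlib

section
/- If V₀ is an isotropic linear subspace of ℝ^{2n} and V = τ_p(V₀) = p·(V₀ × {0}) is its left translate by p ∈ ℍⁿ, then the Korányi metric restricted to V is Euclidean in the horizontal coordinates: d(x,y) = |x' − y'| for all x, y ∈ V. -/
open scoped BigOperators
noncomputable section

abbrev Heis (n : ℕ) := EuclideanSpace ℝ (Fin (2*n)) × ℝ

def symA (n : ℕ) (x y : EuclideanSpace ℝ (Fin (2*n))) : ℝ :=
  ∑ i : Fin n, (x ⟨i.val + n, by have := i.isLt; omega⟩ * y ⟨i.val, by have := i.isLt; omega⟩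
    - x ⟨i.val, by have := i.isLt; omega⟩ * y ⟨i.val + n, by have := i.isLt; omega⟩)

def hMul (n : ℕ) (x y : Heis n) : Heis n :=
  (x.1 + y.1, x.2 + y.2 + 2 * symA n x.1 y.1)

def hInv (n : ℕ) (x : Heis n) : Heis n := (-x.1, -x.2)

def Knorm (n : ℕ) (x : Heis n) : ℝ := (‖x.1‖^4 + x.2^2) ^ ((1:ℝ)/4)

def Kdist (n : ℕ) (x y : Heis n) : ℝ := Knorm n (hMul n (hInv n y) x)

def isotropic (n : ℕ) (W : Submodule ℝ (EuclideanSpace ℝ (Fin (2*n)))) : Prop :=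
  ∀ x ∈ W, ∀ y ∈ W, symA n x y = 0

def plane (n : ℕ) (p : Heis n) (W : Submodule ℝ (EuclideanSpace ℝ (Fin (2*n)))) : Set (Heis n) :=
  {z | ∃ w ∈ W, z = hMul n p (w, (0:ℝ))}

def projH (n : ℕ) (W : Submodule ℝ (EuclideanSpace ℝ (Fin (2*n)))) (x : Heis n) : Heis n :=
  ((W.orthogonalProjection x.1 : EuclideanSpace ℝ (Fin (2*n))), 0)

def PV (n : ℕ) (p : Heis n) (W : Submodule ℝ (EuclideanSpace ℝ (Fin (2*n)))) (x : Heis n) : Heis n :=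
  hMul n p (projH n W (hMul n (hInv n p) x))

lemma symA_expand (n : ℕ) (a b c d : EuclideanSpace ℝ (Fin (2*n))) :
    symA n (a + b) (c + d) = symA n a c + symA n a d + symA n b c + symA n b d := by
  unfold symA
  rw [← Finset.sum_add_distrib, ← Finset.sum_add_distrib, ← Finset.sum_add_distrib]
  refine Finset.sum_congr rfl fun i _ => ?_
  simp [PiLp.add_apply]; ring

lemma symA_neg_left (n : ℕ) (a b : EuclideanSpace ℝ (Fin (2*n))) :
    symA n (-a) b = - symA n a b := by
  unfold symA
  rw [← Finset.sum_neg_distrib]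
  refine Finset.sum_congr rfl fun i _ => ?_
  simp [PiLp.neg_apply]; ring

lemma symA_antisymm (n : ℕ) (a b : EuclideanSpace ℝ (Fin (2*n))) :
    symA n a b = - symA n b a := by
  unfold symA
  rw [← Finset.sum_neg_distrib]
  refine Finset.sum_congr rfl fun i _ => ?_
  ring

/-- On a left translate of a horizontal homogeneous subgroup, the Korányi metric is
Euclidean in the horizontal coordinates. -/
theorem stmt4 (n : ℕ) (W : Submodule ℝ (EuclideanSpace ℝ (Fin (2*n))))
    (hW : isotropic n W) (p : Heis n) (x y : Heis n)
    (hx : x ∈ plane n p W) (hy : y ∈ plane n p W) :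
    Kdist n x y = ‖x.1 - y.1‖ := by
  obtain ⟨w, hw, rfl⟩ := hx
  obtain ⟨v, hv, rfl⟩ := hy
  have h1 : (hMul n p (w, 0)).1 - (hMul n p (v, 0)).1 = w - v := by
    simp [hMul]
  have h2 : hMul n (hInv n (hMul n p (v, 0))) (hMul n p (w, 0)) = (w - v, 0) := by
    unfold hMul hInv
    simp only [Prod.mk.injEq]
    constructor
    · simp; abel
    · have hvw : symA n v w = 0 := hW v hv w hw
      have e := symA_expand n (-p.1) (-v) p.1 w
      simp only [neg_add_rev] at *
      rw [show -v + -p.1 = (-p.1) + (-v) by abel] at *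
      have hpp : symA n p.1 p.1 = 0 := by
        have := symA_antisymm n p.1 p.1; linarith
      have hvp : symA n v p.1 = - symA n p.1 v := symA_antisymm n v p.1
      rw [e, symA_neg_left, symA_neg_left, symA_neg_left, symA_neg_left,
        hpp, hvw, hvp]
      ring
  rw [Kdist, h2, h1, Knorm]
  simp only [add_zero]
  norm_num
  rw [show ‖w - v‖ ^ 4 = (‖w - v‖ ^ 2) ^ 2 by ring]
  rw [show (1:ℝ)/4 = (1/2) * (1/2) by norm_num, ← Real.rpow_natCast _ 2,
    ← Real.rpow_mul (by positivity)]
  norm_num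
  rw [← Real.rpow_natCast _ 2, ← Real.rpow_mul (by positivity)]
  norm_num
end
end

section
/- For every x ∈ ℍⁿ and every Heisenberg plane V ∈ 𝒱^k, the point P_V(x) is a 3-approximate nearest point: d(x, P_V(x)) ≤ 3·d(x, V), where d(x,V) = inf_{v∈V} d(x,v). -/
open scoped BigOperators
noncomputable section

section Aux
variable {n : ℕ}
local notation "E" => EuclideanSpace ℝ (Fin (2*n))

lemma symA_add_left (x y z : E) : symA n (x + y) z = symA n x z + symA n y z := by
  unfold symA
  rw [← Finset.sum_add_distrib]
  exact Finset.sum_congr rfl fun i _ => by simp [PiLp.add_apply]; ring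

lemma symA_add_right (x y z : E) : symA n x (y + z) = symA n x y + symA n x z := by
  unfold symA
  rw [← Finset.sum_add_distrib]
  exact Finset.sum_congr rfl fun i _ => by simp [PiLp.add_apply]; ring

lemma symA_neg_left_s9 (x y : E) : symA n (-x) y = - symA n x y := by
  unfold symA
  rw [← Finset.sum_neg_distrib]
  exact Finset.sum_congr rfl fun i _ => by simp [PiLp.neg_apply]; ring

lemma symA_neg_right (x y : E) : symA n x (-y) = - symA n x y := by
  unfold symA
  rw [← Finset.sum_neg_distrib]
  exact Finset.sum_congr rfl fun i _ => by simp [PiLp.neg_apply]; ring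

lemma symA_antisymm_s9 (x y : E) : symA n x y = - symA n y x := by
  unfold symA
  rw [← Finset.sum_neg_distrib]
  exact Finset.sum_congr rfl fun i _ => by ring

lemma Kdist_eq (x y : Heis n) :
    Kdist n x y = (‖x.1 - y.1‖^4 + (x.2 - y.2 - 2 * symA n y.1 x.1)^2) ^ ((1:ℝ)/4) := by
  simp only [Kdist, Knorm, hMul, hInv, symA_neg_left_s9]
  rw [neg_add_eq_sub]
  ring_nf

lemma kdist_left (p a z : Heis n) :
    Kdist n a (hMul n p z) = Kdist n (hMul n (hInv n p) a) z := by
  rw [Kdist_eq, Kdist_eq]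
  simp only [hMul, hInv]
  congr 1
  congr 1
  · congr 1; abel
  · rw [symA_neg_left_s9, symA_add_right, symA_add_left, symA_neg_right,
      symA_antisymm_s9 z.1 p.1]
    ring

lemma sum_split (f : Fin (2*n) → ℝ) :
    ∑ j, f j = ∑ i : Fin n, f ⟨i.val, by omega⟩ + ∑ i : Fin n, f ⟨i.val + n, by omega⟩ := by
  rw [← Fintype.sum_equiv (finCongr (by omega : n + n = 2*n)) (fun j => f (finCongr (by omega : n + n = 2*n) j)) f (fun i => rfl)]
  rw [Fin.sum_univ_add]
  exact congrArg₂ (· + ·)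
    (Finset.sum_congr rfl fun i _ => congrArg f (Fin.ext (by simp)))
    (Finset.sum_congr rfl fun i _ => congrArg f (Fin.ext (by simp [Nat.add_comm])))

def Jv (x : E) : E := WithLp.toLp 2 fun (j : Fin (2*n)) =>
  if h : (j : ℕ) < n then x ⟨(j : ℕ) + n, by omega⟩ else - x ⟨(j : ℕ) - n, by omega⟩

lemma Jv_apply_lo (x : E) (i : Fin n) : Jv x ⟨i.val, by omega⟩ = x ⟨i.val + n, by omega⟩ := by
  simp [Jv, i.isLt]

lemma Jv_apply_hi (x : E) (i : Fin n) : Jv x ⟨i.val + n, by omega⟩ = - x ⟨i.val, by omega⟩ := by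
  have : ¬ (i.val + n < n) := by omega
  simp only [Jv, PiLp.toLp_apply, this, dif_neg, not_false_iff]
  congr 1
  exact congrArg x (Fin.ext (by simp))

lemma symA_abs_le (x y : E) : |symA n x y| ≤ ‖x‖ * ‖y‖ := by
  have hinner : (inner ℝ (Jv x) y : ℝ) = symA n x y := by
    rw [PiLp.inner_apply]
    simp only [RCLike.inner_apply, conj_trivial]
    rw [sum_split (fun j => y j * Jv x j)]
    unfold symA
    rw [← Finset.sum_add_distrib]
    refine Finset.sum_congr rfl fun i _ => ?_
    rw [Jv_apply_lo, Jv_apply_hi]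
    ring
  have hnorm : ‖Jv x‖ = ‖x‖ := by
    rw [EuclideanSpace.norm_eq, EuclideanSpace.norm_eq]
    congr 1
    rw [sum_split (fun j => ‖Jv x j‖^2), sum_split (fun j => ‖x j‖^2), add_comm]
    congr 1
    · exact Finset.sum_congr rfl fun i _ => by rw [Jv_apply_hi]; simp
    · exact Finset.sum_congr rfl fun i _ => by rw [Jv_apply_lo]
  calc |symA n x y| = |(inner ℝ (Jv x) y : ℝ)| := by rw [hinner]
    _ ≤ ‖Jv x‖ * ‖y‖ := abs_real_inner_le_norm _ _
    _ = ‖x‖ * ‖y‖ := by rw [hnorm]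


lemma main_est (W : Submodule ℝ (EuclideanSpace ℝ (Fin (2*n)))) (hW : isotropic n W)
    (q : Heis n) (w : EuclideanSpace ℝ (Fin (2*n))) (hw : w ∈ W) :
    Kdist n q (projH n W q) ≤ 3 * Kdist n q (w, 0) := by
  set m : EuclideanSpace ℝ (Fin (2*n)) := (W.orthogonalProjection q.1 : EuclideanSpace ℝ (Fin (2*n))) with hm_def
  set u : EuclideanSpace ℝ (Fin (2*n)) := q.1 - m with hu_def
  set h : EuclideanSpace ℝ (Fin (2*n)) := w - m with hh_def
  have hm : m ∈ W := Submodule.coe_mem _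
  have hh : h ∈ W := W.sub_mem hw hm
  have hu_orth : u ∈ Wᗮ := Submodule.sub_starProjection_mem_orthogonal (K := W) q.1
  have hinner : (inner ℝ h u : ℝ) = 0 := hu_orth h hh
  set c : ℝ := symA n h u with hc_def
  set s : ℝ := q.2 - 2 * symA n m u with hs_def
  have pyth : ‖q.1 - w‖^2 = ‖u‖^2 + ‖h‖^2 := by
    have e1 : q.1 - w = u - h := by rw [hu_def, hh_def]; abel
    rw [e1, norm_sub_sq_real, real_inner_comm, hinner]
    ring
  have hmm : symA n m m = 0 := hW m hm m hm
  have hhm : symA n h m = 0 := hW h hh m hm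
  have hq1 : q.1 = u + m := by rw [hu_def]; abel
  have hw1 : w = m + h := by rw [hh_def]; abel
  have hmz : symA n m q.1 = symA n m u := by
    rw [hq1, symA_add_right, hmm, add_zero]
  have hwz : symA n w q.1 = symA n m u + c := by
    rw [hq1, hw1, symA_add_left, symA_add_right, symA_add_right, hmm, hhm, hc_def]
    ring
  have hcabs : c^2 ≤ (‖h‖ * ‖u‖)^2 := by
    have h1 : |c| ≤ ‖h‖ * ‖u‖ := symA_abs_le h u
    calc c^2 = |c|^2 := (sq_abs c).symm
      _ ≤ (‖h‖ * ‖u‖)^2 := by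
          apply pow_le_pow_left₀ (abs_nonneg c) h1
  have hKP : Kdist n q (projH n W q) = (‖u‖^4 + s^2) ^ ((1:ℝ)/4) := by
    rw [Kdist_eq]
    simp only [projH]
    rw [hmz]
    norm_num
    rfl
  have hKw : Kdist n q (w, 0) = (‖q.1 - w‖^4 + (s - 2*c)^2) ^ ((1:ℝ)/4) := by
    rw [Kdist_eq]
    simp only
    rw [hwz, hs_def]
    ring_nf
  have hA : (0:ℝ) ≤ ‖u‖^4 + s^2 := by positivity
  have hB : (0:ℝ) ≤ ‖q.1 - w‖^4 + (s - 2*c)^2 := by positivity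
  have h4 : ‖q.1 - w‖^4 = (‖u‖^2 + ‖h‖^2)^2 := by
    rw [show (4:ℕ) = 2*2 from rfl, pow_mul, pyth]
  have key : ‖u‖^4 + s^2 ≤ 81 * (‖q.1 - w‖^4 + (s - 2*c)^2) := by
    rw [h4]
    nlinarith [sq_nonneg (s - 4*c), sq_nonneg (s - 2*c), hcabs, sq_nonneg (‖u‖^2 - ‖h‖^2),
      sq_nonneg (‖u‖*‖h‖), sq_nonneg ‖u‖, sq_nonneg ‖h‖, sq_nonneg (‖u‖^2 + ‖h‖^2),
      mul_nonneg (mul_nonneg (norm_nonneg u) (norm_nonneg u)) (mul_nonneg (norm_nonneg h) (norm_nonneg h))]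
  have h81 : ((81:ℝ)) ^ ((1:ℝ)/4) = 3 := by
    rw [show (81:ℝ) = 3^(4:ℕ) by norm_num, ← Real.rpow_natCast 3 4, ← Real.rpow_mul (by norm_num)]
    norm_num
  rw [hKP, hKw]
  calc (‖u‖^4 + s^2) ^ ((1:ℝ)/4)
      ≤ (81 * (‖q.1 - w‖^4 + (s - 2*c)^2)) ^ ((1:ℝ)/4) :=
        Real.rpow_le_rpow hA key (by norm_num)
    _ = 3 * (‖q.1 - w‖^4 + (s - 2*c)^2) ^ ((1:ℝ)/4) := by
        rw [Real.mul_rpow (by norm_num) hB, h81]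

end Aux

/-- `P_V(x)` is a 3-approximate nearest point of `x` on the Heisenberg plane `V`. -/
theorem stmt9 (n k : ℕ) (W : Submodule ℝ (EuclideanSpace ℝ (Fin (2*n))))
    (hW : isotropic n W) (hdim : Module.finrank ℝ W = k) (p x : Heis n) :
    Kdist n x (PV n p W x) ≤ 3 * sInf ((fun v => Kdist n x v) '' plane n p W) := by
  set q : Heis n := hMul n (hInv n p) x with hq
  have hPV : Kdist n x (PV n p W x) = Kdist n q (projH n W q) := by
    rw [PV, kdist_left]
  have hne : ((fun v => Kdist n x v) '' plane n p W).Nonempty :=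
    ⟨Kdist n x (hMul n p ((0 : EuclideanSpace ℝ (Fin (2*n))), (0:ℝ))),
      ⟨hMul n p (0, 0), ⟨0, W.zero_mem, rfl⟩, rfl⟩⟩
  have key : ∀ b ∈ ((fun v => Kdist n x v) '' plane n p W),
      Kdist n x (PV n p W x) / 3 ≤ b := by
    rintro b ⟨v, ⟨w, hw, rfl⟩, rfl⟩
    have h1 : Kdist n x (hMul n p (w, 0)) = Kdist n q (w, 0) := kdist_left p x (w, 0)
    have h2 := main_est W hW q w hw
    rw [hPV]
    simp only [h1]
    linarith
  have := le_csInf hne key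
  linarith
end
end
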